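/- Let V be a Hilbert space, J(v) = ½ a(v,v) − ℓ(v) with a symmetric, continuous, coercive and ℓ ∈ V'. Let M be a compact metric space, X a Hilbert space, X₀ ⊂ X a closed subspace with orthogonal projection P (ker P = X₀), T : M → L(V,X) continuous, b ∈ X, and 𝒱 : M → ℝ ∪ {∞} lower semicontinuous. Set V_{b,y} = {v ∈ V : P(T(y)v − b) = 0}. If there exists x₀ ∈ M with 𝒱(x₀) < ∞ and V_{b,x₀} ≠ ∅, then there exists (u,x) with u ∈ V_{b,x} minimizing J(u) + 𝒱(x) over the admissible set W = {(v,y) : v ∈ V_{b,y}}. -/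

import Mathlib

open scoped RealInnerProductSpace
open Filter

private lemma jensen_aux {V : Type*} [NormedAddCommGroup V] [InnerProductSpace ℝ V]
    (a : V →ₗ[ℝ] V →ₗ[ℝ] ℝ) (hsymm : ∀ v w, a v w = a w v)
    (ℓ : V →L[ℝ] ℝ) (J : V → ℝ) (hJ : ∀ v, J v = (1 / 2) * a v v - ℓ v)
    (u v : V) :
    a (u - v) (u - v) = 4 * (J u + J v) - 8 * J ((1/2 : ℝ) • (u + v)) := by
  have hs := hsymm u v
  simp only [hJ, map_add, map_sub, map_smul, LinearMap.add_apply, LinearMap.sub_apply,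
    LinearMap.smul_apply, smul_eq_mul]
  linarith

private lemma Jlb {V : Type*} [NormedAddCommGroup V] [InnerProductSpace ℝ V]
    (a : V →ₗ[ℝ] V →ₗ[ℝ] ℝ)
    (γ : ℝ) (hcoer : ∀ v, γ * ‖v‖ ^ 2 ≤ a v v)
    (ℓ : V →L[ℝ] ℝ) (J : V → ℝ) (hJ : ∀ v, J v = (1 / 2) * a v v - ℓ v)
    (v : V) : γ/2 * ‖v‖ ^ 2 - ‖ℓ‖ * ‖v‖ ≤ J v := by
  have h1 := hcoer v
  have h2 : ℓ v ≤ ‖ℓ‖ * ‖v‖ := (le_abs_self _).trans (Real.norm_eq_abs (ℓ v) ▸ ℓ.le_opNorm v)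
  rw [hJ]; linarith

private lemma Jlb' {V : Type*} [NormedAddCommGroup V] [InnerProductSpace ℝ V]
    (a : V →ₗ[ℝ] V →ₗ[ℝ] ℝ)
    (γ : ℝ) (hγ : 0 < γ) (hcoer : ∀ v, γ * ‖v‖ ^ 2 ≤ a v v)
    (ℓ : V →L[ℝ] ℝ) (J : V → ℝ) (hJ : ∀ v, J v = (1 / 2) * a v v - ℓ v)
    (v : V) : -(‖ℓ‖ ^ 2) / (2 * γ) ≤ J v := by
  have h := Jlb a γ hcoer ℓ J hJ v
  refine le_trans ?_ h
  rw [div_le_iff₀ (by positivity : (0:ℝ) < 2 * γ)]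
  nlinarith [sq_nonneg (γ * ‖v‖ - ‖ℓ‖)]

private lemma Jcont {V : Type*} [NormedAddCommGroup V] [InnerProductSpace ℝ V]
    (a : V →ₗ[ℝ] V →ₗ[ℝ] ℝ)
    (Γ : ℝ) (hbound : ∀ v w, a v w ≤ Γ * ‖v‖ * ‖w‖)
    (ℓ : V →L[ℝ] ℝ) (J : V → ℝ) (hJ : ∀ v, J v = (1 / 2) * a v v - ℓ v) :
    Continuous J := by
  have habs : ∀ v w, ‖a v w‖ ≤ Γ * ‖v‖ * ‖w‖ := by
    intro v w
    rw [Real.norm_eq_abs, abs_le]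
    constructor
    · have := hbound (-v) w
      simp only [map_neg, LinearMap.neg_apply, norm_neg] at this
      linarith
    · exact hbound v w
  set A : V →L[ℝ] V →L[ℝ] ℝ := LinearMap.mkContinuous₂ a Γ habs with hA
  have h1 : Continuous fun v : V => A v v :=
    A.continuous₂.comp (continuous_id.prodMk continuous_id)
  have : J = fun v => (1/2 : ℝ) * A v v - ℓ v := by
    funext v; rw [hJ]; rfl
  rw [this]
  exact (continuous_const.mul h1).sub ℓ.continuous

private lemma exists_min_on {V : Type*} [NormedAddCommGroup V] [InnerProductSpace ℝ V]
    [CompleteSpace V]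
    (a : V →ₗ[ℝ] V →ₗ[ℝ] ℝ) (hsymm : ∀ v w, a v w = a w v)
    (γ : ℝ) (hγ : 0 < γ) (hcoer : ∀ v, γ * ‖v‖ ^ 2 ≤ a v v)
    (ℓ : V →L[ℝ] ℝ) (J : V → ℝ) (hJ : ∀ v, J v = (1 / 2) * a v v - ℓ v)
    (hJcont : Continuous J) (c₀ : ℝ) (hc₀ : ∀ v, c₀ ≤ J v)
    (C : Set V) (hconv : Convex ℝ C) (hclosed : IsClosed C) (hne : C.Nonempty) :
    ∃ u ∈ C, J u = sInf (J '' C) := by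
  have hbdd : BddBelow (J '' C) := ⟨c₀, by rintro x ⟨v, -, rfl⟩; exact hc₀ v⟩
  set I : ℝ := sInf (J '' C) with hI
  have hmem : ∀ n : ℕ, ∃ u, u ∈ C ∧ J u < I + 1/(n+1) := by
    intro n
    have hlt : I < I + 1/(n+1) := by
      have : (0:ℝ) < 1/(n+1) := by positivity
      linarith
    obtain ⟨x, hx, hxlt⟩ := exists_lt_of_csInf_lt (hne.image J) hlt
    obtain ⟨v, hv, rfl⟩ := hx
    exact ⟨v, hv, hxlt⟩
  choose u hu hJu using hmem
  have hIle : ∀ v ∈ C, I ≤ J v := fun v hv => csInf_le hbdd (Set.mem_image_of_mem J hv)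
  have key : ∀ n m : ℕ, γ * ‖u n - u m‖ ^ 2 ≤ 4 * (1/(n+1) + 1/(m+1)) := by
    intro n m
    have hmid : (1/2 : ℝ) • (u n + u m) ∈ C := by
      have := hconv (hu n) (hu m) (by norm_num : (0:ℝ) ≤ 1/2) (by norm_num : (0:ℝ) ≤ 1/2)
        (by norm_num)
      simpa [smul_add] using this
    have h1 := hIle _ hmid
    have h2 := jensen_aux a hsymm ℓ J hJ (u n) (u m)
    have h3 := hcoer (u n - u m)
    have h4 := hJu n
    have h5 := hJu m
    linarith
  have hcauchy : CauchySeq u := by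
    refine cauchySeq_of_le_tendsto_0 (fun N => Real.sqrt ((8/γ) * (1/(N+1)))) ?_ ?_
    · intro n m N hn hm
      rw [dist_eq_norm]
      rw [Real.le_sqrt (norm_nonneg _)]
      have h1 : (1:ℝ)/(n+1) ≤ 1/(N+1) := by
        apply one_div_le_one_div_of_le (by positivity)
        exact_mod_cast by omega
      have h2 : (1:ℝ)/(m+1) ≤ 1/(N+1) := by
        apply one_div_le_one_div_of_le (by positivity)
        exact_mod_cast by omega
      have h3 := key n m
      rw [div_mul_eq_mul_div, le_div_iff₀ hγ]
      nlinarith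
      positivity
    · have h0 : Tendsto (fun N : ℕ => (8/γ) * (1/(N+1) : ℝ)) atTop (nhds 0) := by
        have := tendsto_one_div_add_atTop_nhds_zero_nat (𝕜 := ℝ)
        simpa using this.const_mul (8/γ)
      have := (Real.continuous_sqrt.tendsto 0).comp h0
      simpa [Function.comp_def] using this
  obtain ⟨z, hz⟩ := cauchySeq_tendsto_of_complete hcauchy
  refine ⟨z, hclosed.mem_of_tendsto hz (Filter.Eventually.of_forall hu), ?_⟩
  have hJz : Tendsto (fun n => J (u n)) atTop (nhds (J z)) := (hJcont.tendsto z).comp hz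
  have hJI : Tendsto (fun n => J (u n)) atTop (nhds I) := by
    apply tendsto_of_tendsto_of_tendsto_of_le_of_le (g := fun _ => I)
      (h := fun n : ℕ => I + 1/(n+1)) tendsto_const_nhds
    · have := tendsto_one_div_add_atTop_nhds_zero_nat (𝕜 := ℝ)
      simpa using tendsto_const_nhds.add this
    · exact fun n => hIle _ (hu n)
    · exact fun n => (hJu n).le
  exact tendsto_nhds_unique hJz hJI

private lemma ereal_sub_lt (s x : ℝ) (w : EReal) (h : (x : EReal) < (s : EReal) + w) :
    ((x - s : ℝ) : EReal) < w := by
  induction w using EReal.rec with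
  | bot => simp at h
  | coe r =>
    rw [← EReal.coe_add, EReal.coe_lt_coe_iff] at h
    exact_mod_cast EReal.coe_lt_coe_iff.mpr (by linarith)
  | top => exact EReal.coe_lt_top _


set_option maxHeartbeats 1000000 in
/-- existence of a global minimizer of `J(u) + 𝒱(x)` over the admissible
set `W = {(v,y) : P(T(y)v − b) = 0}`, for a compact metric space `M`, a continuous map
`T : M → L(V,X)`, the orthogonal projection `P` with kernel `X₀`, a lower
semicontinuous `𝒱`, assuming that the feasible set is nonempty for some `x₀` with
`𝒱(x₀) < ∞`. -/
theorem stmt5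
    {V : Type*} [NormedAddCommGroup V] [InnerProductSpace ℝ V] [CompleteSpace V]
    {X : Type*} [NormedAddCommGroup X] [InnerProductSpace ℝ X] [CompleteSpace X]
    {M : Type*} [MetricSpace M] [CompactSpace M]
    (a : V →ₗ[ℝ] V →ₗ[ℝ] ℝ) (hsymm : ∀ v w, a v w = a w v)
    (γ Γ : ℝ) (hγ : 0 < γ) (hΓ : 0 < Γ)
    (hcoer : ∀ v, γ * ‖v‖ ^ 2 ≤ a v v)
    (hbound : ∀ v w, a v w ≤ Γ * ‖v‖ * ‖w‖)
    (ℓ : V →L[ℝ] ℝ)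
    (J : V → ℝ) (hJ : ∀ v, J v = (1 / 2) * a v v - ℓ v)
    (X₀ : Submodule ℝ X) (hX₀closed : IsClosed (X₀ : Set X))
    (P : X →L[ℝ] X) (hPidem : ∀ x, P (P x) = P x)
    (hPsym : ∀ x y, ⟪P x, y⟫ = ⟪x, P y⟫)
    (hPker : ∀ x, P x = 0 ↔ x ∈ X₀)
    (T : M → V →L[ℝ] X) (hTcont : Continuous T) (b : X)
    (𝒱 : M → EReal) (h𝒱 : LowerSemicontinuous 𝒱) (h𝒱bot : ∀ y, 𝒱 y ≠ ⊥)
    (x₀ : M) (hx₀fin : 𝒱 x₀ < ⊤) (hx₀feas : ∃ v : V, P (T x₀ v - b) = 0) :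
    ∃ (u : V) (x : M), P (T x u - b) = 0 ∧
      ∀ (v : V) (y : M), P (T y v - b) = 0 →
        ((J u : ℝ) : EReal) + 𝒱 x ≤ ((J v : ℝ) : EReal) + 𝒱 y := by
  classical
  have hJcont : Continuous J := Jcont a Γ hbound ℓ J hJ
  set c₀ : ℝ := -(‖ℓ‖ ^ 2) / (2 * γ) with hc₀def
  have hc₀ : ∀ v, c₀ ≤ J v := Jlb' a γ hγ hcoer ℓ J hJ
  -- lower bound for 𝒱
  obtain ⟨β, hβ⟩ : ∃ β : ℝ, ∀ y, (β : EReal) ≤ 𝒱 y := by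
    have hcy : ∀ y : M, ∃ c : ℝ, (c : EReal) < 𝒱 y := fun y =>
      ((EReal.exists_between_coe_real (h𝒱bot y).bot_lt).imp fun c hc => hc.2)
    choose c hc using hcy
    have hopen : ∀ y : M, IsOpen {y' | (c y : EReal) < 𝒱 y'} := fun y =>
      h𝒱.isOpen_preimage (c y)
    have hcover : (Set.univ : Set M) ⊆ ⋃ y, {y' | (c y : EReal) < 𝒱 y'} :=
      fun y' _ => Set.mem_iUnion.2 ⟨y', hc y'⟩
    obtain ⟨t, ht⟩ := isCompact_univ.elim_finite_subcover _ hopen hcover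
    have hte : t.Nonempty := by
      by_contra hte
      rw [Finset.not_nonempty_iff_eq_empty] at hte
      have := ht (Set.mem_univ x₀)
      simp [hte] at this
    refine ⟨t.inf' hte c, fun y => ?_⟩
    obtain ⟨i, hit, hi⟩ := Set.mem_iUnion₂.mp (ht (Set.mem_univ y))
    exact le_trans (EReal.coe_le_coe_iff.2 (Finset.inf'_le c hit)) hi.le
  -- the infimum value A
  set S : Set EReal := {e | ∃ v y, P (T y v - b) = 0 ∧ e = ((J v : ℝ) : EReal) + 𝒱 y}
    with hSdef
  obtain ⟨v₀, hv₀⟩ := hx₀feas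
  have hSne : S.Nonempty := ⟨_, v₀, x₀, hv₀, rfl⟩
  set A : EReal := sInf S with hAdef
  have hAbot : ((c₀ + β : ℝ) : EReal) ≤ A := by
    refine le_sInf ?_
    rintro e ⟨v, y, -, rfl⟩
    rw [EReal.coe_add]
    exact add_le_add (EReal.coe_le_coe_iff.2 (hc₀ v)) (hβ y)
  have hAtop : A < ⊤ :=
    lt_of_le_of_lt (sInf_le ⟨v₀, x₀, hv₀, rfl⟩)
      (EReal.add_lt_top (EReal.coe_ne_top _) hx₀fin.ne)
  set α : ℝ := A.toReal with hαdef
  have hAα : A = (α : EReal) :=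
    (EReal.coe_toReal hAtop.ne (fun h => by simp [h] at hAbot)).symm
  -- minimizing sequence
  have hseq : ∀ n : ℕ, ∃ q : V × M, P (T q.2 q.1 - b) = 0 ∧
      ((J q.1 : ℝ) : EReal) + 𝒱 q.2 ≤ ((α + 1/(n+1) : ℝ) : EReal) := by
    intro n
    have hlt : A < ((α + 1/(n+1) : ℝ) : EReal) := by
      rw [hAα]
      refine EReal.coe_lt_coe_iff.2 ?_
      have : (0:ℝ) < 1/(n+1) := by positivity
      linarith
    obtain ⟨e, heS, helt⟩ := sInf_lt_iff.mp hlt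
    obtain ⟨v, y, hf, rfl⟩ := heS
    exact ⟨(v, y), hf, helt.le⟩
  choose q hfeas hval using hseq
  set v : ℕ → V := fun n => (q n).1 with hvdef
  set y : ℕ → M := fun n => (q n).2 with hydef
  -- bound on J (v n)
  set K : ℝ := α + 1 - β with hKdef
  have hJv : ∀ n, J (v n) ≤ K := by
    intro n
    have h1 : ((J (v n) + β : ℝ) : EReal) ≤ ((α + 1/(n+1) : ℝ) : EReal) := by
      rw [EReal.coe_add]
      exact le_trans (add_le_add_right (hβ (y n)) _) (hval n)
    have h2 := EReal.coe_le_coe_iff.mp h1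
    have h3 : (1:ℝ)/(n+1) ≤ 1 := by
      rw [div_le_one (by positivity)]
      simp
    simp only [hKdef]; linarith
  -- norm bound
  set R : ℝ := Real.sqrt (max 0 ((4*K*γ + 4*‖ℓ‖^2)/γ^2)) with hRdef
  have hR : ∀ n, ‖v n‖ ≤ R := by
    intro n
    have hb := Jlb a γ hcoer ℓ J hJ (v n)
    have hKb := hJv n
    rw [hRdef, Real.le_sqrt (norm_nonneg _)]
    refine le_trans ?_ (le_max_right _ _)
    rw [le_div_iff₀ (by positivity : (0:ℝ) < γ^2)]
    nlinarith [sq_nonneg (γ * ‖v n‖ - 2 * ‖ℓ‖)]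
    positivity
  -- convergent subsequence of y
  obtain ⟨x, -, φ, hφmono, hφtend⟩ :=
    isCompact_univ.tendsto_subseq (fun n => (Set.mem_univ (y n)))
  -- the limiting constraint map
  have hgcont : Continuous fun w : V => ‖P (T x w - b)‖ :=
    (P.continuous.comp (((T x).continuous).sub continuous_const)).norm
  -- distance to feasibility along subsequence
  set dlt : ℕ → ℝ := fun k => ‖P (T x (v (φ k)) - b)‖ with hdltdef
  have hdlt_le : ∀ k, dlt k ≤ ‖P‖ * (‖T x - T (y (φ k))‖ * R) := by
    intro k
    have h0 : P (T (y (φ k)) (v (φ k)) - b) = 0 := hfeas (φ k)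
    have h1 : T x (v (φ k)) - b =
        (T x (v (φ k)) - T (y (φ k)) (v (φ k))) + (T (y (φ k)) (v (φ k)) - b) := by abel
    have h2 : P (T x (v (φ k)) - b) = P ((T x - T (y (φ k))) (v (φ k))) := by
      rw [h1, map_add, h0, add_zero, ContinuousLinearMap.sub_apply]
    rw [hdltdef]
    simp only
    rw [h2]
    calc ‖P ((T x - T (y (φ k))) (v (φ k)))‖
        ≤ ‖P‖ * ‖(T x - T (y (φ k))) (v (φ k))‖ := P.le_opNorm _
      _ ≤ ‖P‖ * (‖T x - T (y (φ k))‖ * ‖v (φ k)‖) := by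
          exact mul_le_mul_of_nonneg_left ((T x - T (y (φ k))).le_opNorm _) (norm_nonneg _)
      _ ≤ ‖P‖ * (‖T x - T (y (φ k))‖ * R) := by
          refine mul_le_mul_of_nonneg_left ?_ (norm_nonneg _)
          exact mul_le_mul_of_nonneg_left (hR _) (norm_nonneg _)
  have hTtend : Tendsto (fun k => ‖T x - T (y (φ k))‖) atTop (nhds 0) := by
    have h1 : Tendsto (fun k => T (y (φ k))) atTop (nhds (T x)) :=
      ((hTcont.tendsto x).comp hφtend)
    have h2 := (tendsto_iff_norm_sub_tendsto_zero.mp h1)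
    simpa [norm_sub_rev] using h2
  have hdlt0 : Tendsto dlt atTop (nhds 0) := by
    have hub : Tendsto (fun k => ‖P‖ * (‖T x - T (y (φ k))‖ * R)) atTop (nhds 0) := by
      have := (hTtend.mul_const R).const_mul ‖P‖
      simpa using this
    exact squeeze_zero (fun k => norm_nonneg _) hdlt_le hub
  set e : ℕ → ℝ := fun k => dlt k + 1/(k+1) with hedef
  have hepos : ∀ k, 0 < e k := fun k =>
    add_pos_of_nonneg_of_pos (norm_nonneg _) (by positivity)
  have he0 : Tendsto e atTop (nhds 0) := by
    have h1 : Tendsto (fun k : ℕ => (1:ℝ)/(k+1)) atTop (nhds 0) := by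
      simpa using tendsto_one_div_add_atTop_nhds_zero_nat (𝕜 := ℝ)
    have h2 : Tendsto (fun k : ℕ => dlt k + 1/(k+1)) atTop (nhds (0 + 0)) := hdlt0.add h1
    rw [add_zero] at h2
    exact h2
  -- the relaxed constraint sets
  set C : ℝ → Set V := fun δ => {w | ‖P (T x w - b)‖ ≤ δ} with hCdef
  have hCconv : ∀ δ, Convex ℝ (C δ) := by
    intro δ p hp r hr s t hs ht hst
    have hbb : s • b + t • b = b := by rw [← add_smul, hst, one_smul]
    have h1 : T x (s • p + t • r) - b = s • (T x p - b) + t • (T x r - b) := by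
      have h0 : s • (T x p - b) + t • (T x r - b)
          = s • (T x p) + t • (T x r) - (s • b + t • b) := by
        rw [smul_sub, smul_sub]; abel
      rw [map_add, map_smul, map_smul, h0, hbb]
    have h2 : P (T x (s • p + t • r) - b) = s • P (T x p - b) + t • P (T x r - b) := by
      rw [h1, map_add, map_smul, map_smul]
    have h3 : ‖P (T x (s • p + t • r) - b)‖ ≤ s * ‖P (T x p - b)‖ + t * ‖P (T x r - b)‖ := by
      rw [h2]
      refine le_trans (norm_add_le _ _) ?_
      rw [norm_smul, norm_smul, Real.norm_eq_abs, Real.norm_eq_abs, abs_of_nonneg hs,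
        abs_of_nonneg ht]
    have hp' : ‖P (T x p - b)‖ ≤ δ := hp
    have hr' : ‖P (T x r - b)‖ ≤ δ := hr
    show ‖P (T x (s • p + t • r) - b)‖ ≤ δ
    have h4 : s * ‖P (T x p - b)‖ ≤ s * δ := mul_le_mul_of_nonneg_left hp' hs
    have h5 : t * ‖P (T x r - b)‖ ≤ t * δ := mul_le_mul_of_nonneg_left hr' ht
    have h6 : s * δ + t * δ = δ := by rw [← add_mul, hst, one_mul]
    linarith
  have hCclosed : ∀ δ, IsClosed (C δ) := fun δ => isClosed_le hgcont continuous_const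
  have hCmono : ∀ {δ δ' : ℝ}, δ ≤ δ' → C δ ⊆ C δ' := fun h w hw => le_trans hw h
  have hCmem : ∀ k, v (φ k) ∈ C (e k) := by
    intro k
    have h : (0:ℝ) < 1/(k+1) := by positivity
    show dlt k ≤ dlt k + 1/(k+1)
    linarith
  have hCne : ∀ k, (C (e k)).Nonempty := fun k => ⟨v (φ k), hCmem k⟩
  -- the value function on relaxed sets
  set mf : ℝ → ℝ := fun δ => sInf (J '' C δ) with hmfdef
  have hbddJ : ∀ δ, BddBelow (J '' C δ) := fun δ => ⟨c₀, by rintro z ⟨w, -, rfl⟩; exact hc₀ w⟩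
  have hmf_anti : ∀ {δ δ' : ℝ}, δ ≤ δ' → (C δ).Nonempty → mf δ' ≤ mf δ :=
    fun h hne => csInf_le_csInf (hbddJ _) (hne.image J) (Set.image_mono (hCmono h))
  have hmf_le : ∀ k, mf (e k) ≤ J (v (φ k)) :=
    fun k => csInf_le (hbddJ _) (Set.mem_image_of_mem J (hCmem k))
  have hJvK : ∀ k, J (v (φ k)) ≤ K := fun k => hJv (φ k)
  -- nonemptiness of C δ for all δ > 0
  have hCneδ : ∀ δ : ℝ, 0 < δ → (C δ).Nonempty := by
    intro δ hδ
    obtain ⟨k, hk⟩ := (he0.eventually (gt_mem_nhds hδ)).exists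
    exact ⟨v (φ k), hCmono hk.le (hCmem k)⟩
  have hmf_ub : ∀ δ : ℝ, 0 < δ → mf δ ≤ K := by
    intro δ hδ
    obtain ⟨k, hk⟩ := (he0.eventually (gt_mem_nhds hδ)).exists
    exact le_trans (hmf_anti hk.le (hCne k)) (le_trans (hmf_le k) (hJvK k))
  -- the limit value m0
  set m0 : ℝ := sSup (mf '' Set.Ioi 0) with hm0def
  have hmfne : (mf '' Set.Ioi 0).Nonempty := ⟨mf 1, 1, Set.mem_Ioi.2 one_pos, rfl⟩
  have hmfbdd : BddAbove (mf '' Set.Ioi 0) :=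
    ⟨K, by rintro z ⟨δ, hδ, rfl⟩; exact hmf_ub δ hδ⟩
  have hm0le : ∀ δ : ℝ, 0 < δ → mf δ ≤ m0 :=
    fun δ hδ => le_csSup hmfbdd ⟨δ, hδ, rfl⟩
  -- minimizers on the relaxed sets
  have hmin : ∀ k : ℕ, ∃ u ∈ C (e k), J u = mf (e k) := fun k =>
    exists_min_on a hsymm γ hγ hcoer ℓ J hJ hJcont c₀ hc₀ _ (hCconv _) (hCclosed _) (hCne k)
  choose u hu hJu using hmin
  have hμle : ∀ k, J (u k) ≤ m0 := fun k => (hJu k).le.trans (hm0le _ (hepos k))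
  -- Cauchy property of the minimizers
  have hukey : ∀ (δ₀ : ℝ), 0 < δ₀ → ∀ k l, e k ≤ δ₀ → e l ≤ δ₀ →
      γ * ‖u k - u l‖ ^ 2 ≤ 8 * m0 - 8 * mf δ₀ := by
    intro δ₀ hδ₀ k l hk hl
    have hmid : (1/2 : ℝ) • (u k + u l) ∈ C δ₀ := by
      have h1 : u k ∈ C δ₀ := hCmono hk (hu k)
      have h2 : u l ∈ C δ₀ := hCmono hl (hu l)
      have := (hCconv δ₀) h1 h2 (by norm_num : (0:ℝ) ≤ 1/2) (by norm_num : (0:ℝ) ≤ 1/2)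
        (by norm_num)
      simpa [smul_add] using this
    have h1 : mf δ₀ ≤ J ((1/2 : ℝ) • (u k + u l)) :=
      csInf_le (hbddJ _) (Set.mem_image_of_mem J hmid)
    have h2 := jensen_aux a hsymm ℓ J hJ (u k) (u l)
    have h3 := hcoer (u k - u l)
    have h4 := hμle k
    have h5 := hμle l
    linarith
  have hucauchy : CauchySeq u := by
    rw [Metric.cauchySeq_iff]
    intro ε hε
    set ε' : ℝ := γ * ε^2 / 32 with hε'def
    have hε' : 0 < ε' := by positivity
    obtain ⟨z, hz, hzgt⟩ := exists_lt_of_lt_csSup hmfne (by linarith : m0 - ε' < m0)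
    obtain ⟨δ₀, hδ₀, rfl⟩ := hz
    obtain ⟨N, hN⟩ := (he0.eventually (gt_mem_nhds hδ₀)).exists_forall_of_atTop
    refine ⟨N, fun k hk l hl => ?_⟩
    have h1 := hukey δ₀ hδ₀ k l (hN k hk).le (hN l hl).le
    have h2 : γ * ‖u k - u l‖ ^ 2 ≤ 8 * ε' := by linarith
    have h3 : ‖u k - u l‖ ^ 2 ≤ (ε/2)^2 := by
      have h8 : (8:ℝ) * ε' = γ * ((ε/2)^2) := by rw [hε'def]; ring
      rw [h8] at h2
      exact le_of_mul_le_mul_left h2 hγ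
    have h4 : ‖u k - u l‖ ≤ ε/2 := by
      have := Real.sqrt_le_sqrt h3
      rwa [Real.sqrt_sq (norm_nonneg _), Real.sqrt_sq (by positivity : (0:ℝ) ≤ ε/2)] at this
    rw [dist_eq_norm]
    linarith
  obtain ⟨z, hz⟩ := cauchySeq_tendsto_of_complete hucauchy
  -- μ k → m0
  have hμtend : Tendsto (fun k => J (u k)) atTop (nhds m0) := by
    rw [Metric.tendsto_atTop]
    intro ε hε
    obtain ⟨w, hw, hwgt⟩ := exists_lt_of_lt_csSup hmfne (by linarith : m0 - ε < m0)
    obtain ⟨δ₀, hδ₀, rfl⟩ := hw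
    obtain ⟨N, hN⟩ := (he0.eventually (gt_mem_nhds hδ₀)).exists_forall_of_atTop
    refine ⟨N, fun k hk => ?_⟩
    have h1 : mf δ₀ ≤ mf (e k) := hmf_anti (hN k hk).le (hCne k)
    have h2 : J (u k) ≤ m0 := hμle k
    rw [Real.dist_eq, abs_lt]
    constructor
    · rw [hJu k]; linarith
    · linarith [hε]
  have hJz : J z = m0 :=
    tendsto_nhds_unique ((hJcont.tendsto z).comp hz) hμtend
  -- feasibility of the limit
  have hzfeas : P (T x z - b) = 0 := by
    have h1 : Tendsto (fun k => ‖P (T x (u k) - b)‖) atTop (nhds ‖P (T x z - b)‖) :=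
      (hgcont.tendsto z).comp hz
    have h2 : ‖P (T x z - b)‖ ≤ 0 :=
      le_of_tendsto_of_tendsto' h1 he0 (fun k => hu k)
    rw [← norm_eq_zero]
    exact le_antisymm h2 (norm_nonneg _)
  -- the key inequality  J z + 𝒱 x ≤ A
  have hkey : ((J z : ℝ) : EReal) + 𝒱 x ≤ A := by
    rw [hJz, hAα]
    by_contra hcon
    push_neg at hcon
    have hx' : ((α - m0 : ℝ) : EReal) < 𝒱 x := ereal_sub_lt m0 α (𝒱 x) hcon
    obtain ⟨c, hc1, hc2⟩ := EReal.exists_between_coe_real hx'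
    have hc1' : α - m0 < c := EReal.coe_lt_coe_iff.mp hc1
    have hev : ∀ᶠ k in atTop, (c : EReal) < 𝒱 (y (φ k)) :=
      hφtend.eventually (h𝒱 x c hc2)
    have hchain : ∀ᶠ k in atTop, mf (e k) + c ≤ α + 1/(k+1) := by
      filter_upwards [hev] with k hk
      have h1 : ((mf (e k) + c : ℝ) : EReal) ≤ ((α + 1/(φ k + 1) : ℝ) : EReal) := by
        rw [EReal.coe_add]
        calc ((mf (e k) : ℝ) : EReal) + (c : EReal)
            ≤ ((mf (e k) : ℝ) : EReal) + 𝒱 (y (φ k)) := add_le_add_right hk.le _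
          _ ≤ ((J (v (φ k)) : ℝ) : EReal) + 𝒱 (y (φ k)) :=
              add_le_add_left (EReal.coe_le_coe_iff.2 (hmf_le k)) _
          _ ≤ ((α + 1/(φ k + 1) : ℝ) : EReal) := hval (φ k)
      have h2 := EReal.coe_le_coe_iff.mp h1
      have h3 : (1:ℝ)/(φ k + 1) ≤ 1/(k+1) := by
        apply one_div_le_one_div_of_le (by positivity)
        have hk' : k ≤ φ k := hφmono.le_apply
        have : (k:ℝ) ≤ (φ k : ℝ) := by exact_mod_cast hk'
        linarith
      linarith
    have hlim : m0 + c ≤ α := by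
      have htc : Tendsto (fun k : ℕ => mf (e k) + c) atTop (nhds (m0 + c)) := by
        have : (fun k : ℕ => mf (e k) + c) = fun k => J (u k) + c := by
          funext k; rw [hJu k]
        rw [this]
        exact hμtend.add_const c
      have htb : Tendsto (fun k : ℕ => α + 1/(k+1) : ℕ → ℝ) atTop (nhds α) := by
        have h1 : Tendsto (fun k : ℕ => (1:ℝ)/(k+1)) atTop (nhds 0) := by
          simpa using tendsto_one_div_add_atTop_nhds_zero_nat (𝕜 := ℝ)
        simpa using tendsto_const_nhds.add h1
      exact le_of_tendsto_of_tendsto htc htb hchain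
    linarith
  -- conclusion
  refine ⟨z, x, hzfeas, fun v' y' hvy' => ?_⟩
  exact hkey.trans (sInf_le ⟨v', y', hvy', rfl⟩)
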